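/- arXiv:1012.0547 — 2 statements merged into one kernel-verified Lean document; each statement's English description precedes it below -/
import Mathlib

section
/- If (S, η, μ) is an opmonoidal (oplax monoidal) monad on a monoidal category C, then the Eilenberg-Moore category of S-algebras carries a monoidal structure such that the forgetful functor U : Alg(S) → C is strict monoidal: the tensor of algebras (A, a) and (B, b) is A ⊗ B with structure map (a ⊗ b) ∘ φ_{A,B} : S(A ⊗ B) → A ⊗ B. -/
open CategoryTheory MonoidalCategory

universe v u

section Aux

variable {C : Type u} [Category.{v} C] [MonoidalCategory C] (S : Monad C)
    (ψ : ∀ X Y : C, S.obj (X ⊗ Y) ⟶ S.obj X ⊗ S.obj Y)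
    (ψbar : S.obj (𝟙_ C) ⟶ 𝟙_ C)

/-- Tensor product of algebras. -/
@[simps] def tObj
    (ψ_natural : ∀ {X Y X' Y' : C} (f : X ⟶ X') (g : Y ⟶ Y'),
      S.map (f ⊗ₘ g) ≫ ψ X' Y' = ψ X Y ≫ (S.map f ⊗ₘ S.map g))
    (η_compat : ∀ X Y : C, S.η.app (X ⊗ Y) ≫ ψ X Y = S.η.app X ⊗ₘ S.η.app Y)
    (μ_compat : ∀ X Y : C,
      S.μ.app (X ⊗ Y) ≫ ψ X Y =
        S.map (ψ X Y) ≫ ψ (S.obj X) (S.obj Y) ≫ (S.μ.app X ⊗ₘ S.μ.app Y))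
    (P Q : Monad.Algebra S) : Monad.Algebra S where
  A := P.A ⊗ Q.A
  a := ψ P.A Q.A ≫ (P.a ⊗ₘ Q.a)
  unit := by
    rw [← Category.assoc, η_compat, tensorHom_comp_tensorHom, P.unit, Q.unit]
    exact id_tensorHom_id P.A Q.A
  assoc := by
    rw [← Category.assoc, μ_compat]
    simp only [Category.assoc]
    slice_lhs 3 4 => rw [tensorHom_comp_tensorHom, P.assoc, Q.assoc, ← tensorHom_comp_tensorHom]
    slice_lhs 2 3 => rw [← ψ_natural]
    simp [Functor.map_comp]

/-- The unit algebra. -/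
@[simps] def uAlg
    (η_unit_compat : S.η.app (𝟙_ C) ≫ ψbar = 𝟙 (𝟙_ C))
    (μ_unit_compat : S.μ.app (𝟙_ C) ≫ ψbar = S.map ψbar ≫ ψbar) :
    Monad.Algebra S where
  A := 𝟙_ C
  a := ψbar
  unit := η_unit_compat
  assoc := μ_unit_compat

end Aux

/-- If `(S, η, μ)` is an opmonoidal (oplax monoidal) monad on a monoidal
category `C`, then the Eilenberg-Moore category of `S`-algebras carries a monoidal structure
such that the forgetful functor `U : Alg(S) → C` is strict monoidal: the tensor of algebras
`(A, a)` and `(B, b)` is `A ⊗ B` with structure map `(a ⊗ b) ∘ ψ_{A,B}`. -/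
theorem stmt13 {C : Type u} [Category.{v} C] [MonoidalCategory C] (S : Monad C)
    (ψ : ∀ X Y : C, S.obj (X ⊗ Y) ⟶ S.obj X ⊗ S.obj Y)
    (ψbar : S.obj (𝟙_ C) ⟶ 𝟙_ C)
    (ψ_natural : ∀ {X Y X' Y' : C} (f : X ⟶ X') (g : Y ⟶ Y'),
      S.map (f ⊗ₘ g) ≫ ψ X' Y' = ψ X Y ≫ (S.map f ⊗ₘ S.map g))
    (ψ_coassoc : ∀ X Y Z : C,
      S.map (α_ X Y Z).hom ≫ ψ X (Y ⊗ Z) ≫ (S.obj X ◁ ψ Y Z) =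
        ψ (X ⊗ Y) Z ≫ (ψ X Y ▷ S.obj Z) ≫ (α_ (S.obj X) (S.obj Y) (S.obj Z)).hom)
    (ψ_left : ∀ X : C,
      S.map (λ_ X).hom = ψ (𝟙_ C) X ≫ (ψbar ▷ S.obj X) ≫ (λ_ (S.obj X)).hom)
    (ψ_right : ∀ X : C,
      S.map (ρ_ X).hom = ψ X (𝟙_ C) ≫ (S.obj X ◁ ψbar) ≫ (ρ_ (S.obj X)).hom)
    (η_compat : ∀ X Y : C, S.η.app (X ⊗ Y) ≫ ψ X Y = S.η.app X ⊗ₘ S.η.app Y)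
    (η_unit_compat : S.η.app (𝟙_ C) ≫ ψbar = 𝟙 (𝟙_ C))
    (μ_compat : ∀ X Y : C,
      S.μ.app (X ⊗ Y) ≫ ψ X Y =
        S.map (ψ X Y) ≫ ψ (S.obj X) (S.obj Y) ≫ (S.μ.app X ⊗ₘ S.μ.app Y))
    (μ_unit_compat : S.μ.app (𝟙_ C) ≫ ψbar = S.map ψbar ≫ ψbar) :
    ∃ M : MonoidalCategory (Monad.Algebra S),
      -- the tensor of the algebras `(A, a)` and `(B, b)` is `A ⊗ B`
      -- with structure map `(a ⊗ b) ∘ ψ_{A,B}`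
      (∀ P Q : Monad.Algebra S,
        (@MonoidalCategoryStruct.tensorObj (Monad.Algebra S) _ M.toMonoidalCategoryStruct
            P Q).A = P.A ⊗ Q.A) ∧
      (∀ P Q : Monad.Algebra S,
        HEq (@MonoidalCategoryStruct.tensorObj (Monad.Algebra S) _ M.toMonoidalCategoryStruct
              P Q).a
          (ψ P.A Q.A ≫ (P.a ⊗ₘ Q.a))) ∧
      -- the unit object is the unit of `C`
      ((@MonoidalCategoryStruct.tensorUnit (Monad.Algebra S) _ M.toMonoidalCategoryStruct).A =
        𝟙_ C) ∧
      -- the forgetful functor is strict monoidal: the tensor of algebra morphisms has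
      -- underlying morphism the tensor of the underlying morphisms
      (∀ (P Q P' Q' : Monad.Algebra S) (f : P ⟶ Q) (g : P' ⟶ Q'),
        HEq (@MonoidalCategoryStruct.tensorHom (Monad.Algebra S) _ M.toMonoidalCategoryStruct
              P Q P' Q' f g).f
          (f.f ⊗ₘ g.f)) := by
  -- tensor product of algebra morphisms
  have tHomh : ∀ {P Q P' Q' : Monad.Algebra S} (f : P ⟶ Q) (g : P' ⟶ Q'),
      S.map (f.f ⊗ₘ g.f) ≫ (tObj S ψ ψ_natural η_compat μ_compat Q Q').a =
        (tObj S ψ ψ_natural η_compat μ_compat P P').a ≫ (f.f ⊗ₘ g.f) := by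
    intro P Q P' Q' f g
    dsimp only [tObj]
    rw [← Category.assoc, ψ_natural, Category.assoc, tensorHom_comp_tensorHom, f.h, g.h,
      ← tensorHom_comp_tensorHom, Category.assoc]
  let tHom : ∀ {P Q P' Q' : Monad.Algebra S} (f : P ⟶ Q) (g : P' ⟶ Q'),
      tObj S ψ ψ_natural η_compat μ_compat P P' ⟶ tObj S ψ ψ_natural η_compat μ_compat Q Q' :=
    fun f g => ⟨f.f ⊗ₘ g.f, tHomh f g⟩
  letI struct : MonoidalCategoryStruct (Monad.Algebra S) :=
  { tensorObj := tObj S ψ ψ_natural η_compat μ_compat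
    tensorHom := tHom
    whiskerLeft := fun P _ _ f => tHom (𝟙 P) f
    whiskerRight := fun f Q => tHom f (𝟙 Q)
    tensorUnit := uAlg S ψbar η_unit_compat μ_unit_compat
    associator := fun P Q R => Monad.Algebra.isoMk (α_ P.A Q.A R.A) (by
      dsimp only [tObj]
      calc S.map (α_ P.A Q.A R.A).hom ≫ ψ P.A (Q.A ⊗ R.A) ≫ (P.a ⊗ₘ ψ Q.A R.A ≫ (Q.a ⊗ₘ R.a))
          = S.map (α_ P.A Q.A R.A).hom ≫ ψ P.A (Q.A ⊗ R.A) ≫ (S.obj P.A ◁ ψ Q.A R.A) ≫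
              (P.a ⊗ₘ (Q.a ⊗ₘ R.a)) := by
            rw [← MonoidalCategory.id_tensorHom, tensorHom_comp_tensorHom, Category.id_comp]
        _ = ψ (P.A ⊗ Q.A) R.A ≫ (ψ P.A Q.A ▷ S.obj R.A) ≫
              (α_ (S.obj P.A) (S.obj Q.A) (S.obj R.A)).hom ≫ (P.a ⊗ₘ (Q.a ⊗ₘ R.a)) := by
            rw [← Category.assoc (ψ _ _), ← Category.assoc (S.map _), ψ_coassoc]
            simp
        _ = ψ (P.A ⊗ Q.A) R.A ≫ (ψ P.A Q.A ▷ S.obj R.A) ≫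
              ((P.a ⊗ₘ Q.a) ⊗ₘ R.a) ≫ (α_ P.A Q.A R.A).hom := by
            rw [associator_naturality]
        _ = (ψ (P.A ⊗ Q.A) R.A ≫ ((ψ P.A Q.A ≫ (P.a ⊗ₘ Q.a)) ⊗ₘ R.a)) ≫
              (α_ P.A Q.A R.A).hom := by
            rw [← MonoidalCategory.tensorHom_id]
            slice_lhs 2 3 => rw [tensorHom_comp_tensorHom, Category.id_comp]
            simp)
    leftUnitor := fun P => Monad.Algebra.isoMk (λ_ P.A) (by
      dsimp only [tObj, uAlg]
      rw [ψ_left]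
      simp only [Category.assoc]
      rw [← leftUnitor_naturality]
      slice_lhs 2 3 => rw [← MonoidalCategory.tensorHom_def])
    rightUnitor := fun P => Monad.Algebra.isoMk (ρ_ P.A) (by
      dsimp only [tObj, uAlg]
      rw [ψ_right]
      simp only [Category.assoc]
      rw [← rightUnitor_naturality]
      slice_lhs 2 3 => rw [← tensorHom_def']) }
  refine ⟨MonoidalCategory.ofTensorHom
    (id_tensorHom_id := fun P Q => by ext; exact id_tensorHom_id P.A Q.A)
    (id_tensorHom := fun P _ _ f => rfl)
    (tensorHom_id := fun f Q => rfl)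
    (tensorHom_comp_tensorHom := fun f₁ f₂ g₁ g₂ => by
      ext; exact tensorHom_comp_tensorHom f₁.f f₂.f g₁.f g₂.f)
    (associator_naturality := fun f₁ f₂ f₃ => by
      ext; exact associator_naturality f₁.f f₂.f f₃.f)
    (leftUnitor_naturality := fun {X Y} f => by
      ext
      show (𝟙 (𝟙_ C) ⊗ₘ f.f) ≫ (λ_ Y.A).hom = (λ_ X.A).hom ≫ f.f
      simp)
    (rightUnitor_naturality := fun {X Y} f => by
      ext
      show (f.f ⊗ₘ 𝟙 (𝟙_ C)) ≫ (ρ_ Y.A).hom = (ρ_ X.A).hom ≫ f.f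
      simp)
    (pentagon := fun P Q R T => by
      ext
      show ((α_ P.A Q.A R.A).hom ⊗ₘ 𝟙 T.A) ≫ (α_ P.A (Q.A ⊗ R.A) T.A).hom ≫
          (𝟙 P.A ⊗ₘ (α_ Q.A R.A T.A).hom) =
        (α_ (P.A ⊗ Q.A) R.A T.A).hom ≫ (α_ P.A Q.A (R.A ⊗ T.A)).hom
      simp only [MonoidalCategory.tensorHom_id, MonoidalCategory.id_tensorHom]
      exact MonoidalCategory.pentagon P.A Q.A R.A T.A)
    (triangle := fun P Q => by
      ext
      show (α_ P.A (𝟙_ C) Q.A).hom ≫ (𝟙 P.A ⊗ₘ (λ_ Q.A).hom) = ((ρ_ P.A).hom ⊗ₘ 𝟙 Q.A)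
      simp only [MonoidalCategory.tensorHom_id, MonoidalCategory.id_tensorHom]
      exact MonoidalCategory.triangle P.A Q.A),
    fun P Q => rfl, fun P Q => HEq.rfl, rfl, fun P Q P' Q' f g => HEq.rfl⟩
end

section
/- For an opmonoidal monad S on monoidal category C and S-algebras (A,a), (B,b), the map (a ⊗ b) ∘ φ_{A,B} : S(A ⊗ B) → A ⊗ B satisfies the unit and multiplication axioms for an S-algebra structure on A ⊗ B. -/
open CategoryTheory MonoidalCategory

universe v u

/-- For an opmonoidal monad `S` on a monoidal category `C` and `S`-algebras
`(A, a)`, `(B, b)`, the map `(a ⊗ b) ∘ ψ_{A,B} : S(A ⊗ B) ⟶ A ⊗ B` satisfies the unit and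
multiplication axioms for an `S`-algebra structure on `A ⊗ B`. -/
theorem stmt15 {C : Type u} [Category.{v} C] [MonoidalCategory C] (S : Monad C)
    (ψ : ∀ X Y : C, S.obj (X ⊗ Y) ⟶ S.obj X ⊗ S.obj Y)
    (ψ_natural : ∀ {X Y X' Y' : C} (f : X ⟶ X') (g : Y ⟶ Y'),
      S.map (f ⊗ₘ g) ≫ ψ X' Y' = ψ X Y ≫ (S.map f ⊗ₘ S.map g))
    (η_compat : ∀ X Y : C, S.η.app (X ⊗ Y) ≫ ψ X Y = S.η.app X ⊗ₘ S.η.app Y)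
    (μ_compat : ∀ X Y : C,
      S.μ.app (X ⊗ Y) ≫ ψ X Y =
        S.map (ψ X Y) ≫ ψ (S.obj X) (S.obj Y) ≫ (S.μ.app X ⊗ₘ S.μ.app Y))
    (P Q : Monad.Algebra S) :
    (S.η.app (P.A ⊗ Q.A) ≫ ψ P.A Q.A ≫ (P.a ⊗ₘ Q.a) = 𝟙 (P.A ⊗ Q.A)) ∧
    (S.μ.app (P.A ⊗ Q.A) ≫ ψ P.A Q.A ≫ (P.a ⊗ₘ Q.a) =
      S.map (ψ P.A Q.A ≫ (P.a ⊗ₘ Q.a)) ≫ ψ P.A Q.A ≫ (P.a ⊗ₘ Q.a)) := by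
  constructor
  · rw [← Category.assoc, η_compat, tensorHom_comp_tensorHom, P.unit, Q.unit]
    exact id_tensorHom_id _ _
  · rw [← Category.assoc, μ_compat, S.map_comp]
    simp only [Category.assoc]
    rw [reassoc_of% (ψ_natural P.a Q.a)]
    simp only [tensorHom_comp_tensorHom, P.assoc, Q.assoc]
end
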